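/- arXiv:1105.5823 — 4 statements merged into one kernel-verified Lean document; each statement's English description precedes it below -/
import Mathlib

section
/- Let d ≥ 3 and let ψ₁ ≤ ψ₂ ≤ ... ≤ ψ_d be real numbers with ψ₁ + ... + ψ_d ≤ 0. Then for every p with 1 ≤ p ≤ d−2, writing Ψ_p = ψ₁ + ... + ψ_p, one has ((p+1)/p)·Ψ_p ≤ Ψ_{p+1} ≤ ((d−p−1)/(d−p))·Ψ_p. -/
/-- Proposition 3: for a nondecreasing sequence of reals with nonpositive total
sum, consecutive partial sums satisfy the two-sided multiplicative sandwich
`((p+1)/p)·Ψ_p ≤ Ψ_{p+1} ≤ ((d−p−1)/(d−p))·Ψ_p`. -/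
theorem stmt_1 (d : ℕ) (hd : 3 ≤ d) (ψ : ℕ → ℝ)
    (hmono : ∀ i, 1 ≤ i → i < d → ψ i ≤ ψ (i + 1))
    (hsum : ∑ i ∈ Finset.Icc 1 d, ψ i ≤ 0)
    (p : ℕ) (hp1 : 1 ≤ p) (hp2 : p ≤ d - 2) :
    (((p : ℝ) + 1) / p) * (∑ i ∈ Finset.Icc 1 p, ψ i) ≤ ∑ i ∈ Finset.Icc 1 (p + 1), ψ i ∧
    ∑ i ∈ Finset.Icc 1 (p + 1), ψ i ≤
      (((d : ℝ) - p - 1) / ((d : ℝ) - p)) * (∑ i ∈ Finset.Icc 1 p, ψ i) := by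
  have hpd : p + 2 ≤ d := by omega
  -- general monotonicity
  have mono : ∀ j, j ≤ d → ∀ i, 1 ≤ i → i ≤ j → ψ i ≤ ψ j := by
    intro j
    induction j with
    | zero => intro _ i hi hij; omega
    | succ n ih =>
      intro hn i hi hij
      rcases Nat.lt_or_ge i (n + 1) with h | h
      · have h1 : 1 ≤ n := by omega
        exact le_trans (ih (by omega) i hi (by omega)) (hmono n h1 (by omega))
      · have : i = n + 1 := by omega
        simp [this]
  set S := ∑ i ∈ Finset.Icc 1 p, ψ i with hS
  set a := ψ (p + 1) with ha
  have hsplit : ∑ i ∈ Finset.Icc 1 (p + 1), ψ i = S + a := by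
    rw [hS, ha, ← Finset.sum_Icc_succ_top (by omega : 1 ≤ p + 1)]
  -- S ≤ p * a
  have hSa : S ≤ (p : ℝ) * a := by
    have := Finset.sum_le_card_nsmul (Finset.Icc 1 p) ψ a
      (fun i hi => by
        simp only [Finset.mem_Icc] at hi
        exact mono (p + 1) (by omega) i hi.1 (by omega))
    simpa [Nat.card_Icc, nsmul_eq_mul] using this
  -- tail bound
  have htail : ((d : ℝ) - p - 1) * a ≤ ∑ i ∈ Finset.Icc (p + 2) d, ψ i := by
    have h := Finset.card_nsmul_le_sum (Finset.Icc (p + 2) d) ψ a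
      (fun i hi => by
        simp only [Finset.mem_Icc] at hi
        exact mono i hi.2 (p + 1) (by omega) (by omega))
    have hcard : (Finset.Icc (p + 2) d).card = d - (p + 1) := by
      rw [Nat.card_Icc]; omega
    rw [hcard, nsmul_eq_mul, Nat.cast_sub (by omega)] at h
    push_cast at h
    linarith
  -- split total sum
  have hsum' : S + a + ∑ i ∈ Finset.Icc (p + 2) d, ψ i ≤ 0 := by
    have : ∑ i ∈ Finset.Icc 1 d, ψ i =
        (∑ i ∈ Finset.Icc 1 (p + 1), ψ i) + ∑ i ∈ Finset.Icc (p + 2) d, ψ i := by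
      rw [← Finset.sum_union (by
        rw [Finset.disjoint_left]
        intro x hx hx'
        simp only [Finset.mem_Icc] at hx hx'
        omega)]
      congr 1
      ext x
      simp only [Finset.mem_union, Finset.mem_Icc]
      omega
    rw [this, hsplit] at hsum
    linarith
  have hkey : S + ((d : ℝ) - p) * a ≤ 0 := by nlinarith
  have hp0 : (0 : ℝ) < p := by exact_mod_cast hp1
  have hdp : (0 : ℝ) < (d : ℝ) - p := by
    have : (p : ℝ) + 2 ≤ d := by exact_mod_cast hpd
    linarith
  constructor
  · rw [hsplit, div_mul_eq_mul_div, div_le_iff₀ hp0]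
    nlinarith
  · rw [hsplit, div_mul_eq_mul_div, le_div_iff₀ hdp]
    nlinarith
end

section
/- Let m, n be positive integers with d = m + n ≥ 3. Suppose s, s′ > 0 and ψ₁(s), ψ₁(s′), ψ₂(s) are reals satisfying s(1 + ψ₁(s)) = s′(1 + ψ₁(s′)) ≥ 0 and s(ψ₂(s) − m/n) ≤ s′(ψ₁(s′) − m/n), with s′ ≤ s and ψ₁(s′) ≠ −1. Then ψ₂(s) ≤ ψ₁(s) + d·(ψ₁(s′) − ψ₁(s))/(n + n·ψ₁(s′)). -/
/-- First half of Lemma 1 (arithmetic content): from the scaling relations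
`s(1+ψ₁(s)) = s′(1+ψ₁(s′)) ≥ 0` and `s(ψ₂(s) − m/n) ≤ s′(ψ₁(s′) − m/n)`,
with `s′ ≤ s` and `ψ₁(s′) ≠ −1`, one gets
`ψ₂(s) ≤ ψ₁(s) + d·(ψ₁(s′) − ψ₁(s))/(n + n·ψ₁(s′))`. -/
theorem stmt_5 (m n : ℕ) (hm : 0 < m) (hn : 0 < n) (d : ℕ) (hd : d = m + n)
    (hd3 : 3 ≤ d) (s s' ψ₁s ψ₁s' ψ₂s : ℝ) (hs : 0 < s) (hs' : 0 < s')
    (heq : s * (1 + ψ₁s) = s' * (1 + ψ₁s'))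
    (hnonneg : 0 ≤ s' * (1 + ψ₁s'))
    (hineq : s * (ψ₂s - (m : ℝ) / n) ≤ s' * (ψ₁s' - (m : ℝ) / n))
    (hle : s' ≤ s) (hne : ψ₁s' ≠ -1) :
    ψ₂s ≤ ψ₁s + (d : ℝ) * (ψ₁s' - ψ₁s) / ((n : ℝ) + n * ψ₁s') := by
  have hn' : (0:ℝ) < n := by exact_mod_cast hn
  have hc : 0 < 1 + ψ₁s' := by
    rcases (nonneg_of_mul_nonneg_right hnonneg hs').lt_or_eq with h | h
    · exact h
    · exact absurd (by linarith) hne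
  have hnc : (0:ℝ) < (n:ℝ) + n * ψ₁s' := by nlinarith
  -- clear the division m/n in hineq
  have h2 : s * ((n:ℝ) * ψ₂s - m) ≤ s' * ((n:ℝ) * ψ₁s' - m) := by
    nlinarith [mul_le_mul_of_nonneg_right hineq hn'.le,
      div_mul_cancel₀ (m:ℝ) hn'.ne']
  rw [← sub_le_iff_le_add', le_div_iff₀ hnc, hd]
  push_cast
  have key := mul_le_mul_of_nonneg_right h2 hc.le
  have hgoal : s * ((ψ₂s - ψ₁s) * ((n:ℝ) + n * ψ₁s')) ≤ s * (((m:ℝ) + n) * (ψ₁s' - ψ₁s)) := by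
    nlinarith [key, heq]
  exact le_of_mul_le_mul_left (by linarith) hs
end

section
/- Let m, n be positive integers with d = m + n ≥ 3. Suppose s, s′ > 0 and ψ₁(s), ψ₁(s′), ψ₂(s) are reals satisfying s(ψ₁(s) − m/n) = s′(ψ₁(s′) − m/n) < 0 and s(1 + ψ₂(s)) ≤ s′(1 + ψ₁(s′)), with s′ ≥ s. Then ψ₂(s) ≤ ψ₁(s) + d·(ψ₁(s′) − ψ₁(s))/(m − n·ψ₁(s′)). -/
/-- Second half of Lemma 1 (arithmetic content): from
`s(ψ₁(s) − m/n) = s′(ψ₁(s′) − m/n) < 0` and `s(1 + ψ₂(s)) ≤ s′(1 + ψ₁(s′))`,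
with `s′ ≥ s`, one gets `ψ₂(s) ≤ ψ₁(s) + d·(ψ₁(s′) − ψ₁(s))/(m − n·ψ₁(s′))`. -/
theorem stmt_6 (m n : ℕ) (hm : 0 < m) (hn : 0 < n) (d : ℕ) (hd : d = m + n)
    (hd3 : 3 ≤ d) (s s' ψ₁s ψ₁s' ψ₂s : ℝ) (hs : 0 < s) (hs' : 0 < s')
    (heq : s * (ψ₁s - (m : ℝ) / n) = s' * (ψ₁s' - (m : ℝ) / n))
    (hneg : s' * (ψ₁s' - (m : ℝ) / n) < 0)
    (hineq : s * (1 + ψ₂s) ≤ s' * (1 + ψ₁s'))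
    (hge : s ≤ s') :
    ψ₂s ≤ ψ₁s + (d : ℝ) * (ψ₁s' - ψ₁s) / ((m : ℝ) - n * ψ₁s') := by
  have hnR : (0:ℝ) < n := by exact_mod_cast hn
  have hne : (n:ℝ) ≠ 0 := ne_of_gt hnR
  have hb' : ψ₁s' - (m:ℝ)/n < 0 := by
    by_contra h
    push_neg at h
    nlinarith
  have hpos : (0:ℝ) < (m:ℝ) - n * ψ₁s' := by
    have := (sub_neg.mp hb')
    rw [lt_div_iff₀ hnR] at this
    nlinarith
  have h1 : s * ((n:ℝ)*ψ₁s - m) = s' * ((n:ℝ)*ψ₁s' - m) := by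
    field_simp at heq
    linarith [heq]
  have h2 : s' * ((m:ℝ) - n*ψ₁s') = s * ((m:ℝ) - n*ψ₁s) := by linarith [h1]
  have key : (1 + ψ₂s) * ((m:ℝ) - n*ψ₁s') ≤ ((m:ℝ) - n*ψ₁s) * (1 + ψ₁s') := by
    have h3 := mul_le_mul_of_nonneg_right hineq (le_of_lt hpos)
    have h4 : s' * (1 + ψ₁s') * ((m:ℝ) - n*ψ₁s') = s * (((m:ℝ) - n*ψ₁s) * (1 + ψ₁s')) := by
      nlinarith [h2]
    nlinarith [h3, h4]
  have hdR : (d:ℝ) = (m:ℝ) + n := by rw [hd]; push_cast; ring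
  have h5 : ψ₂s - ψ₁s ≤ (d:ℝ) * (ψ₁s' - ψ₁s) / ((m:ℝ) - n * ψ₁s') := by
    rw [le_div_iff₀ hpos]
    rw [hdR]
    nlinarith [key]
  linarith [h5]
end

section
/- Let n ≥ 2, d ≥ 3, m = d − n ≥ 1, and let ψ, ψ′, Ψ₂ be reals with ψ ≤ 0, ψ′ ≤ 0, ψ′ ≠ −1, n + n·ψ′ > 0, Ψ₂ ≤ 2ψ + d·(ψ′ − ψ)/(n + n·ψ′), and ((d−1)/(d−2))·Ψ₂ ≤ ψ ≤ Ψ₂/2. If ψ′ ≥ (m−n)/(2n), then Ψ₂ ≤ 2ψ′; and if ψ′ ≤ (m−n)/(2n), then Ψ₂ ≤ (d−2)·ψ′/((m−1) − n·ψ′). -/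
/-- Algebraic core of the first case in the proof of Corollary 2: eliminating
`ψ₁(s)` from inequality (38) using the sandwich (39) yields inequality (41). -/
theorem stmt_7 (n d m : ℕ) (hn : 2 ≤ n) (hd : 3 ≤ d) (hm : m = d - n) (hm1 : 1 ≤ m)
    (ψ ψ' Ψ₂ : ℝ) (hψ : ψ ≤ 0) (hψ' : ψ' ≤ 0) (hne : ψ' ≠ -1)
    (hden : (n : ℝ) + n * ψ' > 0)
    (hΨ : Ψ₂ ≤ 2 * ψ + (d : ℝ) * (ψ' - ψ) / ((n : ℝ) + n * ψ'))
    (hsand₁ : (((d : ℝ) - 1) / ((d : ℝ) - 2)) * Ψ₂ ≤ ψ)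
    (hsand₂ : ψ ≤ Ψ₂ / 2) :
    (ψ' ≥ ((m : ℝ) - n) / (2 * n) → Ψ₂ ≤ 2 * ψ') ∧
    (ψ' ≤ ((m : ℝ) - n) / (2 * n) →
      Ψ₂ ≤ ((d : ℝ) - 2) * ψ' / (((m : ℝ) - 1) - n * ψ')) := by
  have hnd : n ≤ d := by omega
  have hcast : (m : ℝ) = (d : ℝ) - n := by
    rw [hm]; push_cast [Nat.cast_sub hnd]; ring
  have hdR : (3 : ℝ) ≤ d := by exact_mod_cast hd
  have hnR : (2 : ℝ) ≤ n := by exact_mod_cast hn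
  have hmd : (n : ℝ) + 1 ≤ d := by
    have : n + 1 ≤ d := by omega
    exact_mod_cast this
  have hnpos : (0 : ℝ) < 2 * n := by linarith
  have hd2 : (0 : ℝ) < (d : ℝ) - 2 := by linarith
  -- key cleared-denominator form of hΨ
  have key : Ψ₂ * ((n : ℝ) + n * ψ') ≤
      2 * ψ * ((n : ℝ) + n * ψ') + (d : ℝ) * (ψ' - ψ) := by
    have h2 : (d : ℝ) * (ψ' - ψ) / ((n : ℝ) + n * ψ') * ((n : ℝ) + n * ψ')
        = (d : ℝ) * (ψ' - ψ) := div_mul_cancel₀ _ hden.ne'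
    nlinarith [mul_le_mul_of_nonneg_right hΨ hden.le]
  -- cleared-denominator form of hsand₁
  have hs1 : ((d : ℝ) - 1) * Ψ₂ ≤ ψ * ((d : ℝ) - 2) := by
    have h2 : (((d : ℝ) - 1) / ((d : ℝ) - 2)) * Ψ₂ * ((d : ℝ) - 2)
        = ((d : ℝ) - 1) * Ψ₂ := by field_simp
    nlinarith [mul_le_mul_of_nonneg_right hsand₁ hd2.le]
  constructor
  · intro hc
    rw [ge_iff_le, div_le_iff₀ hnpos, hcast] at hc
    -- 2q ≥ d
    have h2q : (d : ℝ) ≤ 2 * ((n : ℝ) + n * ψ') := by linarith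
    nlinarith [mul_nonneg (by linarith : (0:ℝ) ≤ Ψ₂ / 2 - ψ)
        (by linarith : (0:ℝ) ≤ 2 * ((n : ℝ) + n * ψ') - d), key, hdR]
  · intro hc
    rw [le_div_iff₀ hnpos, hcast] at hc
    have h2q : 2 * ((n : ℝ) + n * ψ') ≤ (d : ℝ) := by linarith
    have hD2 : (0 : ℝ) < ((m : ℝ) - 1) - n * ψ' := by
      rcases lt_or_eq_of_le hψ' with h | h
      · have : (0:ℝ) < -(n * ψ') := by nlinarith
        have hm1R : (1 : ℝ) ≤ m := by exact_mod_cast hm1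
        linarith
      · -- ψ' = 0, then d ≥ 2n so m ≥ n ≥ 2
        rw [h] at hc ⊢
        rw [hcast]
        simp only [mul_zero, sub_zero] at hc ⊢
        linarith
    rw [le_div_iff₀ hD2, hcast]
    nlinarith [key, hs1,
      mul_nonneg (by linarith : (0:ℝ) ≤ ψ * ((d:ℝ)-2) - ((d:ℝ)-1) * Ψ₂)
        (by linarith : (0:ℝ) ≤ (d:ℝ) - 2 * ((n : ℝ) + n * ψ')),
      hd2.le, hden.le]
end
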